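/- Let E be a real Banach space, let α > 0, Δx > 0, set Δt̃ = Δx/(2α), let 0 < Δt < Δt̃, and set λ = Δt/Δt̃. Let u_C ∈ E and let u : ℝ → ℝ → E be such that u(Δt̃, ·) is integrable on [0, Δx/2], u(Δt, x) = u(Δt̃, x/λ) for x ∈ [0, α·Δt], and u(Δt, x) = u_C for x ∈ [α·Δt, Δx/2]. If moreover there exists w ∈ E such that (2/Δx)·∫₀^{Δx/2} u(Δt̃, x) dx = u_C − (2Δt̃/Δx)·w, then (2/Δx)·∫₀^{Δx/2} u(Δt, x) dx = u_C − (2Δt/Δx)·w. -/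

import Mathlib

open MeasureTheory

/-- The only effect of time dilation on the Godunov step is to shorten the input time:
if the half-cell average at the maximal CFL time `Δtmax = Δx/(2α)` equals
`u_C − (2Δtmax/Δx)·w` (with `w` playing the role of the flux difference
`f(u_C) − f(u*ᴸ)`), then the half-cell average at the shortened time `Δt < Δtmax`
equals `u_C − (2Δt/Δx)·w`. -/
theorem godunov_step_time_dilation {E : Type*} [NormedAddCommGroup E]
    [NormedSpace ℝ E] [CompleteSpace E]
    (α Δx Δt Δtmax lam : ℝ) (hα : 0 < α) (hΔx : 0 < Δx)
    (hΔtmax : Δtmax = Δx / (2 * α)) (hΔt : 0 < Δt) (hlt : Δt < Δtmax)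
    (hlam : lam = Δt / Δtmax)
    (uC : E) (u : ℝ → ℝ → E)
    (hint : IntegrableOn (u Δtmax) (Set.Icc 0 (Δx / 2)))
    (h1 : ∀ x ∈ Set.Icc (0 : ℝ) (α * Δt), u Δt x = u Δtmax (x / lam))
    (h2 : ∀ x ∈ Set.Icc (α * Δt) (Δx / 2), u Δt x = uC)
    (w : E)
    (hw : (2 / Δx) • ∫ x in (0 : ℝ)..(Δx / 2), u Δtmax x = uC - (2 * Δtmax / Δx) • w) :
    (2 / Δx) • ∫ x in (0 : ℝ)..(Δx / 2), u Δt x = uC - (2 * Δt / Δx) • w := by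
  have hΔtmax_pos : 0 < Δtmax := hΔt.trans hlt
  have hlam_pos : 0 < lam := by rw [hlam]; positivity
  have hlam_ne : lam ≠ 0 := hlam_pos.ne'
  set a := α * Δt with ha
  set b := Δx / 2 with hb
  have hb_pos : 0 < b := by positivity
  have hab : a < b := by
    have : b = α * Δtmax := by
      rw [hΔtmax]; field_simp; ring
    rw [this, ha]
    exact (mul_lt_mul_iff_right₀ hα).mpr hlt
  have ha_pos : 0 < a := by positivity
  have ha_div : a / lam = b := by
    rw [ha, hlam]
    have hbt : b = α * Δtmax := by rw [hΔtmax]; field_simp; ring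
    rw [hbt]
    field_simp
  have hlam_b : lam * b = a := by
    rw [← ha_div]; field_simp
  -- interval integrability of u Δtmax on [0, b]
  have hII : IntervalIntegrable (u Δtmax) volume 0 b :=
    (hint.mono_set (by rw [Set.uIcc_of_le hb_pos.le])).intervalIntegrable
  -- composed function interval integrable on [0, a]
  have hcomp : IntervalIntegrable (fun x => u Δtmax (x / lam)) volume 0 a := by
    have h := hII.comp_mul_right (c := lam⁻¹)
    have hb2 : b / lam⁻¹ = a := by rw [div_eq_mul_inv, inv_inv, mul_comm]; exact hlam_b
    rw [hb2, zero_div] at h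
    simpa [div_eq_mul_inv] using h
  have hI1 : IntervalIntegrable (u Δt) volume 0 a := by
    rw [intervalIntegrable_iff_integrableOn_Ioc_of_le ha_pos.le] at hcomp ⊢
    exact hcomp.congr_fun
      (fun x hx => (h1 x (Set.Ioc_subset_Icc_self hx)).symm) measurableSet_Ioc
  have hI2 : IntervalIntegrable (u Δt) volume a b := by
    rw [intervalIntegrable_iff_integrableOn_Ioc_of_le hab.le]
    exact ((integrableOn_const_iff (C := uC)).mpr (Or.inr measure_Ioc_lt_top)).congr_fun
      (fun x hx => (h2 x (Set.Ioc_subset_Icc_self hx)).symm) measurableSet_Ioc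
  -- split the integral
  have hsplit : (∫ x in (0:ℝ)..b, u Δt x)
      = (∫ x in (0:ℝ)..a, u Δt x) + ∫ x in a..b, u Δt x :=
    (intervalIntegral.integral_add_adjacent_intervals hI1 hI2).symm
  have hpiece1 : (∫ x in (0:ℝ)..a, u Δt x) = lam • ∫ x in (0:ℝ)..b, u Δtmax x := by
    rw [intervalIntegral.integral_congr (g := fun x => u Δtmax (x / lam)) ?_]
    · rw [intervalIntegral.integral_comp_div _ hlam_ne, zero_div, ha_div]
    · intro x hx
      exact h1 x (by rwa [Set.uIcc_of_le ha_pos.le] at hx)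
  have hpiece2 : (∫ x in a..b, u Δt x) = (b - a) • uC := by
    rw [intervalIntegral.integral_congr (g := fun _ => uC) ?_,
      intervalIntegral.integral_const]
    intro x hx
    exact h2 x (by rwa [Set.uIcc_of_le hab.le] at hx)
  have hval : (∫ x in (0:ℝ)..b, u Δtmax x) = b • uC - Δtmax • w := by
    have hb1 : 2 / Δx * b = 1 := by rw [hb]; field_simp
    have h2b : (2 / Δx) • (b • uC - Δtmax • w) = uC - (2 * Δtmax / Δx) • w := by
      rw [smul_sub, smul_smul, smul_smul, hb1, one_smul,
        show 2 / Δx * Δtmax = 2 * Δtmax / Δx from by ring]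
    rw [← h2b] at hw
    have h2Δx : (2 / Δx) ≠ 0 := by positivity
    exact smul_right_injective E h2Δx hw
  rw [hsplit, hpiece1, hpiece2, hval]
  have hΔtmax_ne : Δtmax ≠ 0 := hΔtmax_pos.ne'
  match_scalars <;> simp only [ha, hb, hlam, hΔtmax] <;> field_simp <;> ring
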